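/- Let ≻₁ and ≻₂ be hope-and-prepare preferences with representations (u, C₁, D₁) and (u, C₂, D₂) respectively, with the same utility function u. Then ≻₁ is more ambiguity loving than ≻₂ if and only if D₂ ⊆ D₁. -/

import Mathlib

/-!
Framework: Anscombe–Aumann acts, finitely additive probability measures,
simple acts, hope-and-prepare preferences (Bastianello–Hill style setup).
-/

open Set

section Framework

variable (S : Type*) [MeasurableSpace S]

/-- The measurable sets (events) of `S`, as a subtype. -/
abbrev MSet := {A : Set S // MeasurableSet A}

/-- Finitely additive probability measures on `(S, Σ)`, viewed as real-valued
set functions on events.  The weak* topology is the topology of pointwise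
convergence on events, i.e. the product topology on `MSet S → ℝ`. -/
def ProbCharges : Set (MSet S → ℝ) :=
  {p | (∀ A, 0 ≤ p A) ∧ p ⟨Set.univ, MeasurableSet.univ⟩ = 1 ∧
    ∀ A B : MSet S, Disjoint A.1 B.1 → p ⟨A.1 ∪ B.1, A.2.union B.2⟩ = p A + p B}

end Framework

section Fns

variable {S : Type*} [MeasurableSpace S]

/-- `φ : S → ℝ` is a measurable simple function (an element of `B₀(Σ)`). -/
def IsSimpleFn (φ : S → ℝ) : Prop :=
  (Set.range φ).Finite ∧ ∀ y : ℝ, MeasurableSet (φ ⁻¹' {y})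

/-- The integral `∫ φ dp` of a simple function `φ` against a finitely additive
measure `p` (junk value `0` if `φ` is not simple). -/
noncomputable def fInt (p : MSet S → ℝ) (φ : S → ℝ) : ℝ :=
  @dite _ (IsSimpleFn φ) (Classical.dec _)
    (fun h => ∑ y ∈ h.1.toFinset, y * p ⟨φ ⁻¹' {y}, h.2 y⟩) (fun _ => 0)

/-- A functional `I : B₀(Σ) → ℝ` is monotonic. -/
def MonotonicFn (I : (S → ℝ) → ℝ) : Prop :=
  ∀ φ ψ, IsSimpleFn φ → IsSimpleFn ψ → (∀ s, φ s ≤ ψ s) → I φ ≤ I ψ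

/-- A functional `I : B₀(Σ) → ℝ` is constant-linear: `I(aφ + b) = a I(φ) + b`
for `a ≥ 0`, `b ∈ ℝ`. -/
def ConstLinearFn (I : (S → ℝ) → ℝ) : Prop :=
  ∀ φ, IsSimpleFn φ → ∀ a : ℝ, 0 ≤ a → ∀ b : ℝ,
    I (fun s => a * φ s + b) = a * I φ + b

end Fns

section Acts

variable {S : Type*} [MeasurableSpace S] {V : Type*} [AddCommGroup V] [Module ℝ V]

/-- `f : S → V` is a simple act with outcomes in `X`: it is `X`-valued,
takes finitely many values and is `Σ`-measurable. -/
def IsAct (X : Set V) (f : S → V) : Prop :=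
  (∀ s, f s ∈ X) ∧ (Set.range f).Finite ∧ ∀ v : V, MeasurableSet (f ⁻¹' {v})

/-- Pointwise mixture `αf + (1-α)g` of two acts. -/
def mixAct (α : ℝ) (f g : S → V) : S → V := fun s => α • f s + (1 - α) • g s

/-- The constant act with outcome `x`. -/
def constAct (S : Type*) {V : Type*} (x : V) : S → V := fun _ => x

/-- `u : V → ℝ` is affine on the convex set `X`. -/
def IsAffineOn (u : V → ℝ) (X : Set V) : Prop :=
  ∀ x ∈ X, ∀ y ∈ X, ∀ α : ℝ, 0 ≤ α → α ≤ 1 →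
    u (α • x + (1 - α) • y) = α * u x + (1 - α) * u y

/-- `u` is non-constant on `X`. -/
def NonConstOn (u : V → ℝ) (X : Set V) : Prop := ∃ x ∈ X, ∃ y ∈ X, u x ≠ u y

/-- Expected utility `∫ u(f) dp` of the act `f` under the measure `p`. -/
noncomputable def EU (u : V → ℝ) (f : S → V) (p : MSet S → ℝ) : ℝ :=
  fInt p (fun s => u (f s))

/-- Worst-case expected utility of `f` over the set of scenarios `C`. -/
noncomputable def minEU (u : V → ℝ) (C : Set (MSet S → ℝ)) (f : S → V) : ℝ :=
  sInf (EU u f '' C)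

/-- Best-case expected utility of `f` over the set of scenarios `D`. -/
noncomputable def maxEU (u : V → ℝ) (D : Set (MSet S → ℝ)) (f : S → V) : ℝ :=
  sSup (EU u f '' D)

/-- `f` and `g` are incomparable (`f ⋈ g`). -/
def Incomp (R : (S → V) → (S → V) → Prop) (f g : S → V) : Prop := ¬ R f g ∧ ¬ R g f

end Acts

section Axioms

variable {S : Type*} [MeasurableSpace S] {V : Type*} [AddCommGroup V] [Module ℝ V]
variable (X : Set V) (R : (S → V) → (S → V) → Prop)

/-- Axiom 1: `≻` is asymmetric and transitive on acts, and its restriction to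
constant acts is non-trivial and negatively transitive. -/
def PrefAx1 : Prop :=
  (∀ f g, IsAct X f → IsAct X g → R f g → ¬ R g f) ∧
  (∀ f g h, IsAct X f → IsAct X g → IsAct X h → R f g → R g h → R f h) ∧
  (∃ x ∈ X, ∃ y ∈ X, R (constAct S x) (constAct S y)) ∧
  (∀ x ∈ X, ∀ y ∈ X, ∀ z ∈ X, ¬ R (constAct S x) (constAct S y) →
    ¬ R (constAct S y) (constAct S z) → ¬ R (constAct S x) (constAct S z))

/-- Axiom 2 (continuity). -/
def PrefAx2 : Prop :=
  ∀ f g h, IsAct X f → IsAct X g → IsAct X h →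
    IsOpen {α : Set.Icc (0 : ℝ) 1 | R (mixAct (α : ℝ) f g) h} ∧
    IsOpen {α : Set.Icc (0 : ℝ) 1 | R h (mixAct (α : ℝ) f g)}

/-- Axiom 3 (certainty independence). -/
def PrefAx3 : Prop :=
  ∀ f g, IsAct X f → IsAct X g → ∀ x ∈ X, ∀ α : ℝ, 0 < α → α < 1 →
    (R f g ↔ R (mixAct α f (constAct S x)) (mixAct α g (constAct S x)))

/-- Axiom 4: for any outcome `x`, the upper and lower contour sets at the
constant act `x` are convex. -/
def PrefAx4 : Prop :=
  ∀ x ∈ X,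
    (∀ f g, IsAct X f → IsAct X g → R f (constAct S x) → R g (constAct S x) →
      ∀ α : ℝ, 0 ≤ α → α ≤ 1 → R (mixAct α f g) (constAct S x)) ∧
    (∀ f g, IsAct X f → IsAct X g → R (constAct S x) f → R (constAct S x) g →
      ∀ α : ℝ, 0 ≤ α → α ≤ 1 → R (constAct S x) (mixAct α f g))

/-- Axiom 5 (monotonicity). -/
def PrefAx5 : Prop :=
  ∀ f g, IsAct X f → IsAct X g →
    (∀ s : S, R (constAct S (f s)) (constAct S (g s))) → R f g

/-- Axiom 6: if every outcome incomparable to `f` is incomparable to `g`,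
then `f` and `g` are incomparable. -/
def PrefAx6 : Prop :=
  ∀ f g, IsAct X f → IsAct X g →
    (∀ x ∈ X, Incomp R f (constAct S x) → Incomp R g (constAct S x)) → Incomp R f g

/-- Axiom 7: if `f ⋈ x`, `x ≻ g`, `g ⋈ y` and `f ≻ y`, then `f ≻ g`. -/
def PrefAx7 : Prop :=
  ∀ f g, IsAct X f → IsAct X g → ∀ x ∈ X, ∀ y ∈ X,
    Incomp R f (constAct S x) → R (constAct S x) g →
    Incomp R g (constAct S y) → R f (constAct S y) → R f g

end Axioms

section Reps

variable {S : Type*} [MeasurableSpace S] {V : Type*} [AddCommGroup V] [Module ℝ V]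

/-- `(u, C, D)` is a hope-and-prepare representation of `R`. -/
def IsHPRep (X : Set V) (R : (S → V) → (S → V) → Prop) (u : V → ℝ)
    (C D : Set (MSet S → ℝ)) : Prop :=
  IsAffineOn u X ∧ NonConstOn u X ∧
  C.Nonempty ∧ D.Nonempty ∧ C ⊆ ProbCharges S ∧ D ⊆ ProbCharges S ∧
  IsCompact C ∧ IsCompact D ∧ Convex ℝ C ∧ Convex ℝ D ∧ (C ∩ D).Nonempty ∧
  ∀ f g, IsAct X f → IsAct X g →
    (R f g ↔ (minEU u C g < minEU u C f ∧ maxEU u D g < maxEU u D f))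

/-- `(u, C)` is a Bewley representation of `R`. -/
def IsBewleyRep (X : Set V) (R : (S → V) → (S → V) → Prop) (u : V → ℝ)
    (C : Set (MSet S → ℝ)) : Prop :=
  IsAffineOn u X ∧ NonConstOn u X ∧
  C.Nonempty ∧ C ⊆ ProbCharges S ∧ IsCompact C ∧ Convex ℝ C ∧
  ∀ f g, IsAct X f → IsAct X g → (R f g ↔ ∀ p ∈ C, EU u g p < EU u f p)

/-- `(u, C, D)` is a twofold multi-prior representation of `R`. -/
def IsTwofoldRep (X : Set V) (R : (S → V) → (S → V) → Prop) (u : V → ℝ)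
    (C D : Set (MSet S → ℝ)) : Prop :=
  IsAffineOn u X ∧ NonConstOn u X ∧
  C.Nonempty ∧ D.Nonempty ∧ C ⊆ ProbCharges S ∧ D ⊆ ProbCharges S ∧
  IsCompact C ∧ IsCompact D ∧ Convex ℝ C ∧ Convex ℝ D ∧ (C ∩ D).Nonempty ∧
  ∀ f g, IsAct X f → IsAct X g → (R f g ↔ maxEU u D g < minEU u C f)

end Reps

section AuxBasic
set_option linter.unusedSectionVars false

variable {S : Type*} [MeasurableSpace S]

lemma pc_congr (p : MSet S → ℝ) {A B : Set S} (hA : MeasurableSet A)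
    (hB : MeasurableSet B) (h : A = B) : p ⟨A, hA⟩ = p ⟨B, hB⟩ := by subst h; rfl

lemma pc_empty {p : MSet S → ℝ} (hp : p ∈ ProbCharges S) :
    p ⟨∅, MeasurableSet.empty⟩ = 0 := by
  have := hp.2.2 ⟨∅, MeasurableSet.empty⟩ ⟨∅, MeasurableSet.empty⟩ (by simp)
  have h2 : p ⟨∅ ∪ ∅, MeasurableSet.empty.union MeasurableSet.empty⟩
      = p ⟨∅, MeasurableSet.empty⟩ := pc_congr _ _ _ (by simp)
  rw [h2] at this; linarith

lemma pc_biUnion {κ : Type*} {p : MSet S → ℝ} (hp : p ∈ ProbCharges S)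
    (t : Finset κ) (E : κ → MSet S)
    (hdisj : ∀ i ∈ t, ∀ j ∈ t, i ≠ j → Disjoint (E i).1 (E j).1)
    (hU : MeasurableSet (⋃ i ∈ t, (E i).1)) :
    p ⟨⋃ i ∈ t, (E i).1, hU⟩ = ∑ i ∈ t, p (E i) := by
  classical
  induction t using Finset.induction_on with
  | empty => rw [pc_congr p hU MeasurableSet.empty (by simp), pc_empty hp]; simp
  | @insert a t ha ih =>
    have hUt : MeasurableSet (⋃ i ∈ t, (E i).1) :=
      MeasurableSet.biUnion t.countable_toSet (fun i _ => (E i).2)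
    have hd : Disjoint (E a).1 (⋃ i ∈ t, (E i).1) := by
      rw [Set.disjoint_iff_inter_eq_empty]
      ext s; simp only [Set.mem_inter_iff, Set.mem_iUnion, Set.mem_empty_iff_false,
        iff_false, not_and, not_exists]
      intro hsa i hi hsi
      exact Set.disjoint_left.mp
        (hdisj a (Finset.mem_insert_self a t) i (Finset.mem_insert_of_mem hi)
          (fun h => ha (h ▸ hi))) hsa hsi
    have := hp.2.2 (E a) ⟨⋃ i ∈ t, (E i).1, hUt⟩ hd
    rw [pc_congr p hU ((E a).2.union hUt) (by simp [Set.biUnion_insert]), this,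
      ih (fun i hi j hj hij => hdisj i (Finset.mem_insert_of_mem hi) j
        (Finset.mem_insert_of_mem hj) hij) hUt,
      Finset.sum_insert ha]

end AuxBasic
section AuxInt

variable {S : Type*} [MeasurableSpace S]

lemma fInt_eq {φ : S → ℝ} (h : IsSimpleFn φ) (p : MSet S → ℝ) :
    fInt p φ = ∑ y ∈ h.1.toFinset, y * p ⟨φ ⁻¹' {y}, h.2 y⟩ := by
  unfold fInt
  rw [dif_pos h]

/-- Integral of a function constant on the pieces of a finite measurable
partition against a finitely additive probability. -/
lemma fInt_partition {κ : Type*} {p : MSet S → ℝ} (hp : p ∈ ProbCharges S)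
    (t : Finset κ) (E : κ → MSet S)
    (hdisj : ∀ i ∈ t, ∀ j ∈ t, i ≠ j → Disjoint (E i).1 (E j).1)
    (hcov : ∀ s : S, ∃ i ∈ t, s ∈ (E i).1)
    (φ : S → ℝ) (v : κ → ℝ) (hv : ∀ i ∈ t, ∀ s ∈ (E i).1, φ s = v i) :
    IsSimpleFn φ ∧ fInt p φ = ∑ i ∈ t, v i * p (E i) := by
  classical
  have hrange : Set.range φ ⊆ ↑(t.image v) := by
    rintro y ⟨s, rfl⟩
    obtain ⟨i, hi, hsi⟩ := hcov s
    simp only [Finset.coe_image, Set.mem_image, Finset.mem_coe]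
    exact ⟨i, hi, (hv i hi s hsi).symm⟩
  have hpre : ∀ y : ℝ, φ ⁻¹' {y} = ⋃ i ∈ t.filter (fun i => v i = y), (E i).1 := by
    intro y
    ext s
    simp only [Set.mem_preimage, Set.mem_singleton_iff, Set.mem_iUnion,
      Finset.mem_filter, exists_prop]
    constructor
    · rintro rfl
      obtain ⟨i, hi, hsi⟩ := hcov s
      exact ⟨i, ⟨hi, (hv i hi s hsi).symm⟩, hsi⟩
    · rintro ⟨i, ⟨hi, rfl⟩, hsi⟩
      exact hv i hi s hsi
  have hsimp : IsSimpleFn φ := by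
    refine ⟨Set.Finite.subset (t.image v).finite_toSet hrange, fun y => ?_⟩
    rw [hpre y]
    exact MeasurableSet.biUnion (Finset.countable_toSet _) (fun i _ => (E i).2)
  refine ⟨hsimp, ?_⟩
  rw [fInt_eq hsimp p]
  -- restrict to nonempty pieces
  set t' : Finset κ := t.filter (fun i => ((E i).1).Nonempty) with ht'
  have hsum : ∀ y : ℝ, p ⟨φ ⁻¹' {y}, hsimp.2 y⟩
      = ∑ i ∈ t'.filter (fun i => v i = y), p (E i) := by
    intro y
    have hUm : MeasurableSet (⋃ i ∈ t'.filter (fun i => v i = y), (E i).1) :=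
      MeasurableSet.biUnion (Finset.countable_toSet _) (fun i _ => (E i).2)
    rw [pc_congr p (hsimp.2 y) hUm ?_]
    · exact pc_biUnion hp _ E (fun i hi j hj hij =>
        hdisj i (Finset.mem_of_mem_filter _ (Finset.mem_of_mem_filter _ hi))
          j (Finset.mem_of_mem_filter _ (Finset.mem_of_mem_filter _ hj)) hij) hUm
    · rw [hpre y]
      ext s
      simp only [Set.mem_iUnion, Finset.mem_filter, ht', exists_prop]
      constructor
      · rintro ⟨i, ⟨hi, hvy⟩, hsi⟩
        exact ⟨i, ⟨⟨hi, ⟨s, hsi⟩⟩, hvy⟩, hsi⟩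
      · rintro ⟨i, ⟨⟨hi, _⟩, hvy⟩, hsi⟩
        exact ⟨i, ⟨hi, hvy⟩, hsi⟩
  calc ∑ y ∈ hsimp.1.toFinset, y * p ⟨φ ⁻¹' {y}, hsimp.2 y⟩
      = ∑ y ∈ hsimp.1.toFinset, ∑ i ∈ t'.filter (fun i => v i = y), v i * p (E i) := by
        refine Finset.sum_congr rfl (fun y hy => ?_)
        rw [hsum y, Finset.mul_sum]
        exact Finset.sum_congr rfl (fun i hi => by
          rw [(Finset.mem_filter.mp hi).2])
    _ = ∑ i ∈ t', v i * p (E i) := by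
        refine Finset.sum_fiberwise_of_maps_to (fun i hi => ?_) _
        rw [Set.Finite.mem_toFinset]
        obtain ⟨hi', s, hsi⟩ := Finset.mem_filter.mp hi
        exact ⟨s, hv i hi' s hsi⟩
    _ = ∑ i ∈ t, v i * p (E i) := by
        refine Finset.sum_subset (Finset.filter_subset _ _) (fun i hi hni => ?_)
        have hE : (E i).1 = ∅ := by
          by_contra h
          exact hni (Finset.mem_filter.mpr ⟨hi, Set.nonempty_iff_ne_empty.mpr h⟩)
        rw [pc_congr p (E i).2 MeasurableSet.empty hE, pc_empty hp, mul_zero]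

end AuxInt
section AuxEU

variable {S : Type*} [MeasurableSpace S] [Nonempty S]
variable {V : Type*} [AddCommGroup V] [Module ℝ V]

/-- Composition of a finite-range, measurable-fibers map with any function. -/
lemma comp_simple {α β : Type*} {f : S → α} (hfin : (Set.range f).Finite)
    (hmeas : ∀ a : α, MeasurableSet (f ⁻¹' {a})) (g : α → β) :
    (Set.range (fun s => g (f s))).Finite ∧
      ∀ b : β, MeasurableSet ((fun s => g (f s)) ⁻¹' {b}) := by
  constructor
  · exact Set.Finite.subset (hfin.image g) (by rintro y ⟨s, rfl⟩; exact ⟨f s, ⟨s, rfl⟩, rfl⟩)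
  · intro b
    have : (fun s => g (f s)) ⁻¹' {b} = ⋃ a ∈ {a : α | a ∈ Set.range f ∧ g a = b}, f ⁻¹' {a} := by
      ext s
      simp only [Set.mem_preimage, Set.mem_singleton_iff, Set.mem_iUnion, Set.mem_setOf_eq,
        exists_prop]
      exact ⟨fun h => ⟨f s, ⟨⟨s, rfl⟩, h⟩, rfl⟩, by rintro ⟨a, ⟨_, rfl⟩, rfl⟩; rfl⟩
    rw [this]
    exact MeasurableSet.biUnion ((hfin.subset (fun a ha => ha.1)).countable)
      (fun a _ => hmeas a)

/-- `u ∘ f` is a simple function whenever `f` is an act. -/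
lemma act_usimple {X : Set V} {f : S → V} (hf : IsAct X f) (u : V → ℝ) :
    IsSimpleFn (fun s => u (f s)) :=
  comp_simple hf.2.1 hf.2.2 u

lemma constAct_isAct {X : Set V} {x : V} (hx : x ∈ X) : IsAct X (constAct S x) := by
  refine ⟨fun _ => hx, Set.finite_range_const, fun v => ?_⟩
  by_cases h : x = v
  · subst h
    have : (constAct S x) ⁻¹' {x} = Set.univ := by
      ext s; simp [constAct]
    rw [this]; exact MeasurableSet.univ
  · have : (constAct S x) ⁻¹' {v} = ∅ := by
      ext s; simp [constAct, h]
    rw [this]; exact MeasurableSet.empty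

lemma fInt_const {p : MSet S → ℝ} (hp : p ∈ ProbCharges S) (c : ℝ) :
    fInt p (fun _ : S => c) = c := by
  classical
  have := fInt_partition hp {0} (fun _ : ℕ => (⟨Set.univ, MeasurableSet.univ⟩ : MSet S))
    (by intro i hi j hj hij; simp_all) (fun s => ⟨0, by simp⟩)
    (fun _ => c) (fun _ => c) (fun i _ s _ => rfl)
  rw [this.2]
  simp [hp.2.1]

lemma EU_const {p : MSet S → ℝ} (hp : p ∈ ProbCharges S) (u : V → ℝ) (x : V) :
    EU u (constAct S x) p = u x := fInt_const hp (u x)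

lemma minEU_const {C : Set (MSet S → ℝ)} (hC : C.Nonempty) (hC' : C ⊆ ProbCharges S)
    (u : V → ℝ) (x : V) : minEU u C (constAct S x) = u x := by
  have : EU u (constAct S x) '' C = {u x} := by
    apply Set.Subset.antisymm
    · rintro y ⟨p, hp, rfl⟩; exact EU_const (hC' hp) u x
    · rintro y rfl
      obtain ⟨p, hp⟩ := hC
      exact ⟨p, hp, EU_const (hC' hp) u x⟩
  rw [minEU, this, csInf_singleton]

lemma maxEU_const {D : Set (MSet S → ℝ)} (hD : D.Nonempty) (hD' : D ⊆ ProbCharges S)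
    (u : V → ℝ) (x : V) : maxEU u D (constAct S x) = u x := by
  have : EU u (constAct S x) '' D = {u x} := by
    apply Set.Subset.antisymm
    · rintro y ⟨p, hp, rfl⟩; exact EU_const (hD' hp) u x
    · rintro y rfl
      obtain ⟨p, hp⟩ := hD
      exact ⟨p, hp, EU_const (hD' hp) u x⟩
  rw [maxEU, this, csSup_singleton]

lemma fInt_continuous {φ : S → ℝ} (h : IsSimpleFn φ) :
    Continuous (fun p : MSet S → ℝ => fInt p φ) := by
  have : (fun p : MSet S → ℝ => fInt p φ)
      = fun p => ∑ y ∈ h.1.toFinset, y * p ⟨φ ⁻¹' {y}, h.2 y⟩ := by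
    funext p; exact fInt_eq h p
  rw [this]
  exact continuous_finset_sum _ (fun y _ => (continuous_const.mul (continuous_apply _)))

lemma EU_image_compact {X : Set V} {f : S → V} (hf : IsAct X f) (u : V → ℝ)
    {D : Set (MSet S → ℝ)} (hD : IsCompact D) : IsCompact (EU u f '' D) :=
  hD.image (fInt_continuous (act_usimple hf u))

end AuxEU
section AuxChar

set_option linter.unusedSectionVars false

variable {S : Type*} [MeasurableSpace S] [Nonempty S]
variable {V : Type*} [AddCommGroup V] [Module ℝ V]

/-- For HP preferences, `x ≻ f` iff the best-case EU of `f` is below `u x`. -/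
lemma hp_const_char {X : Set V} {R : (S → V) → (S → V) → Prop} {u : V → ℝ}
    {C D : Set (MSet S → ℝ)} (h : IsHPRep X R u C D)
    {f : S → V} (hf : IsAct X f) {x : V} (hx : x ∈ X) :
    R (constAct S x) f ↔ maxEU u D f < u x := by
  obtain ⟨_, _, hCne, hDne, hCsub, hDsub, hCcpt, hDcpt, _, _, hCD, hrep⟩ := h
  rw [hrep (constAct S x) f (constAct_isAct hx) hf,
    minEU_const hCne hCsub u x, maxEU_const hDne hDsub u x]
  constructor
  · exact fun h => h.2
  · intro hmax
    refine ⟨?_, hmax⟩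
    obtain ⟨p0, hp0C, hp0D⟩ := hCD
    have h1 : minEU u C f ≤ EU u f p0 :=
      csInf_le (EU_image_compact hf u hCcpt).bddBelow ⟨p0, hp0C, rfl⟩
    have h2 : EU u f p0 ≤ maxEU u D f :=
      le_csSup (EU_image_compact hf u hDcpt).bddAbove ⟨p0, hp0D, rfl⟩
    linarith

end AuxChar
section AuxSep

set_option linter.unusedSectionVars false

open Topology Filter

variable {ι : Type*} [DecidableEq ι]

/-- A continuous linear functional on `ι → ℝ` is a finite linear combination
of coordinate evaluations. -/
lemma clm_pi_repr (L : (ι → ℝ) →L[ℝ] ℝ) :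
    ∃ F : Finset ι, ∀ p : ι → ℝ, L p = ∑ A ∈ F, p A * L (Pi.single A (1:ℝ) : ι → ℝ) := by
  classical
  have hpre : L ⁻¹' (Set.Ioo (-1 : ℝ) 1) ∈ 𝓝 (0 : ι → ℝ) := by
    have h0 : L 0 ∈ Set.Ioo (-1 : ℝ) 1 := by simp
    exact L.continuous.continuousAt.preimage_mem_nhds (Ioo_mem_nhds (by norm_num) (by norm_num))
  rw [nhds_pi, Filter.mem_pi] at hpre
  obtain ⟨I, hIfin, t, ht, hsub⟩ := hpre
  refine ⟨hIfin.toFinset, fun p => ?_⟩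
  have hker : ∀ w : ι → ℝ, (∀ A ∈ I, w A = 0) → L w = 0 := by
    intro w hw
    by_contra hLw
    have hmem : ∀ r : ℝ, (r • w) ∈ I.pi t := by
      intro r A hA
      have : (r • w) A = 0 := by simp [hw A hA]
      rw [this]
      exact mem_of_mem_nhds (ht A)
    have h1 : ∀ r : ℝ, r * L w ∈ Set.Ioo (-1 : ℝ) 1 := by
      intro r
      have := hsub (hmem r)
      rwa [Set.mem_preimage, map_smul, smul_eq_mul] at this
    have := (h1 (1 / L w)).2
    rw [one_div_mul_cancel hLw] at this
    exact lt_irrefl 1 this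
  set w : ι → ℝ := p - ∑ A ∈ hIfin.toFinset, p A • (Pi.single A (1:ℝ) : ι → ℝ) with hwdef
  have hw0 : ∀ B ∈ I, w B = 0 := by
    intro B hB
    have hBF : B ∈ hIfin.toFinset := hIfin.mem_toFinset.mpr hB
    simp only [hwdef, Pi.sub_apply, Finset.sum_apply, Pi.smul_apply, Pi.single_apply,
      smul_eq_mul, mul_ite, mul_one, mul_zero]
    rw [Finset.sum_ite_eq hIfin.toFinset B (fun A => p A)]
    simp [hBF]
  have hLw : L w = 0 := hker w hw0
  have : L p = L w + L (∑ A ∈ hIfin.toFinset, p A • (Pi.single A (1:ℝ) : ι → ℝ)) := by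
    rw [← map_add]
    congr 1
    simp [hwdef]
  rw [this, hLw, zero_add, map_sum]
  exact Finset.sum_congr rfl (fun A _ => by rw [map_smul, smul_eq_mul])

end AuxSep
section AuxAtoms

set_option linter.unusedSectionVars false

variable {S : Type*} [MeasurableSpace S]

open Classical in
/-- The atom of the finite family `F` determined by the subfamily `T`. -/
noncomputable def atomOf (F : Finset (MSet S)) (T : Finset (MSet S)) : MSet S :=
  ⟨⋂ A ∈ (F : Set (MSet S)), (if A ∈ T then A.1 else A.1ᶜ),
    MeasurableSet.biInter F.countable_toSet
      (fun A _ => by by_cases h : A ∈ T <;> simp [h, A.2, A.2.compl])⟩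

lemma mem_atomOf {F T : Finset (MSet S)} {s : S} :
    s ∈ (atomOf F T).1 ↔ ∀ A ∈ F, (s ∈ A.1 ↔ A ∈ T) := by
  classical
  simp only [atomOf, Set.mem_iInter, Finset.mem_coe]
  refine forall₂_congr (fun A hA => ?_)
  by_cases h : A ∈ T <;> simp [h]

lemma atomOf_sigma {F : Finset (MSet S)} {s : S} [DecidablePred fun A : MSet S => s ∈ A.1] :
    s ∈ (atomOf F (F.filter (fun A => s ∈ A.1))).1 := by
  rw [mem_atomOf]
  intro A hA
  simp [Finset.mem_filter, hA]

/-- Integral of `s ↦ α * ∑_{A ∈ F} c A · 1_A(s) + β` against a probability charge. -/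
lemma fInt_indicator_comb {p : MSet S → ℝ} (hp : p ∈ ProbCharges S)
    (F : Finset (MSet S)) (c : MSet S → ℝ) (α β : ℝ) :
    IsSimpleFn (fun s : S => α * (∑ A ∈ F, c A * (A.1.indicator (fun _ => (1:ℝ)) s)) + β) ∧
    fInt p (fun s : S => α * (∑ A ∈ F, c A * (A.1.indicator (fun _ => (1:ℝ)) s)) + β)
      = α * (∑ A ∈ F, c A * p A) + β := by
  classical
  set ψ : S → ℝ := fun s => α * (∑ A ∈ F, c A * (A.1.indicator (fun _ => (1:ℝ)) s)) + β with hψ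
  set v : Finset (MSet S) → ℝ := fun T => α * (∑ A ∈ T, c A) + β with hv
  have hdisj : ∀ T ∈ F.powerset, ∀ T' ∈ F.powerset, T ≠ T' →
      Disjoint (atomOf F T).1 (atomOf F T').1 := by
    intro T hT T' hT' hne
    rw [Set.disjoint_left]
    intro s hs hs'
    rw [mem_atomOf] at hs hs'
    apply hne
    apply Finset.Subset.antisymm
    · intro A hAT
      exact (hs' A (Finset.mem_powerset.mp hT hAT)).mp
        ((hs A (Finset.mem_powerset.mp hT hAT)).mpr hAT)
    · intro A hAT
      exact (hs A (Finset.mem_powerset.mp hT' hAT)).mp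
        ((hs' A (Finset.mem_powerset.mp hT' hAT)).mpr hAT)
  have hcov : ∀ s : S, ∃ T ∈ F.powerset, s ∈ (atomOf F T).1 :=
    fun s => ⟨F.filter (fun A => s ∈ A.1), Finset.mem_powerset.mpr (Finset.filter_subset _ _),
      atomOf_sigma⟩
  have hval : ∀ T ∈ F.powerset, ∀ s ∈ (atomOf F T).1, ψ s = v T := by
    intro T hT s hs
    rw [mem_atomOf] at hs
    simp only [hψ, hv]
    have step : ∑ A ∈ F, c A * (A.1.indicator (fun _ => (1:ℝ)) s)
        = ∑ A ∈ F, (if A ∈ T then c A else 0) := by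
      refine Finset.sum_congr rfl (fun A hA => ?_)
      by_cases h : A ∈ T
      · rw [if_pos h, Set.indicator_of_mem ((hs A hA).mpr h), mul_one]
      · rw [if_neg h, Set.indicator_of_notMem (fun hsa => h ((hs A hA).mp hsa)), mul_zero]
    rw [step, Finset.sum_ite_mem, Finset.inter_eq_right.mpr (Finset.mem_powerset.mp hT)]
  obtain ⟨hsimp, hint⟩ := fInt_partition hp F.powerset (atomOf F) hdisj hcov ψ v hval
  refine ⟨hsimp, ?_⟩
  rw [hint]
  have hsum1 : ∑ T ∈ F.powerset, p (atomOf F T) = 1 := by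
    have hU : MeasurableSet (⋃ T ∈ F.powerset, (atomOf F T).1) :=
      MeasurableSet.biUnion (Finset.countable_toSet _) (fun T _ => (atomOf F T).2)
    have h2 := pc_biUnion hp F.powerset (atomOf F) hdisj hU
    rw [← h2, pc_congr p hU MeasurableSet.univ ?_, hp.2.1]
    ext s
    simp only [Set.mem_iUnion, Set.mem_univ, iff_true, exists_prop]
    exact hcov s
  have key : ∀ A ∈ F, ∑ T ∈ F.powerset.filter (fun T => A ∈ T), p (atomOf F T) = p A := by
    intro A hA
    have hU : MeasurableSet (⋃ T ∈ F.powerset.filter (fun T => A ∈ T), (atomOf F T).1) :=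
      MeasurableSet.biUnion (Finset.countable_toSet _) (fun T _ => (atomOf F T).2)
    have hset : (⋃ T ∈ F.powerset.filter (fun T => A ∈ T), (atomOf F T).1) = A.1 := by
      ext s
      simp only [Set.mem_iUnion, exists_prop, Finset.mem_filter]
      constructor
      · rintro ⟨T, ⟨_, hAT⟩, hs⟩
        exact (mem_atomOf.mp hs A hA).mpr hAT
      · intro hs
        exact ⟨F.filter (fun B => s ∈ B.1),
          ⟨Finset.mem_powerset.mpr (Finset.filter_subset _ _), Finset.mem_filter.mpr ⟨hA, hs⟩⟩,
          atomOf_sigma⟩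
    rw [← pc_biUnion hp _ (atomOf F) (fun T hT T' hT' h =>
      hdisj T (Finset.mem_of_mem_filter _ hT) T' (Finset.mem_of_mem_filter _ hT') h) hU]
    exact pc_congr p hU A.2 hset
  have hsum2 : ∑ T ∈ F.powerset, (∑ A ∈ T, c A) * p (atomOf F T)
      = ∑ A ∈ F, c A * p A := by
    have step1 : ∀ T ∈ F.powerset, (∑ A ∈ T, c A) * p (atomOf F T)
        = ∑ A ∈ F, (if A ∈ T then c A * p (atomOf F T) else 0) := by
      intro T hT
      rw [Finset.sum_mul, ← Finset.inter_eq_right.mpr (Finset.mem_powerset.mp hT),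
        ← Finset.sum_ite_mem]
      simp [Finset.inter_eq_right.mpr (Finset.mem_powerset.mp hT)]
    rw [Finset.sum_congr rfl step1, Finset.sum_comm]
    refine Finset.sum_congr rfl (fun A hA => ?_)
    rw [← Finset.sum_filter, ← Finset.mul_sum, key A hA]
  calc ∑ T ∈ F.powerset, v T * p (atomOf F T)
      = α * (∑ T ∈ F.powerset, (∑ A ∈ T, c A) * p (atomOf F T))
        + β * (∑ T ∈ F.powerset, p (atomOf F T)) := by
        rw [Finset.mul_sum, Finset.mul_sum, ← Finset.sum_add_distrib]
        exact Finset.sum_congr rfl (fun T _ => by simp only [hv]; ring)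
    _ = α * (∑ A ∈ F, c A * p A) + β := by rw [hsum1, hsum2, mul_one]

end AuxAtoms


section Statement

variable {S : Type*} [MeasurableSpace S] [Nonempty S]
variable {V : Type*} [AddCommGroup V] [Module ℝ V]

/-- Proposition 2(ii): for hope-and-prepare preferences `≻₁`
and `≻₂` with representations `(u, C₁, D₁)` and `(u, C₂, D₂)`, `≻₁` is more
ambiguity loving than `≻₂` iff `D₂ ⊆ D₁`. -/
theorem statement7 (X : Set V) (hX : Convex ℝ X) (hX2 : ∃ x ∈ X, ∃ y ∈ X, x ≠ y)
    (R1 R2 : (S → V) → (S → V) → Prop) (u : V → ℝ)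
    (C1 D1 C2 D2 : Set (MSet S → ℝ))
    (h1 : IsHPRep X R1 u C1 D1) (h2 : IsHPRep X R2 u C2 D2) :
    (∀ f, IsAct X f → ∀ x ∈ X, R1 (constAct S x) f → R2 (constAct S x) f) ↔
      D2 ⊆ D1 := by
  classical
  obtain ⟨haff, hnc, hC1ne, hD1ne, hC1s, hD1s, hC1c, hD1c, hC1v, hD1v, hCD1, hrep1⟩ := h1
  obtain ⟨-, -, hC2ne, hD2ne, hC2s, hD2s, hC2c, hD2c, hC2v, hD2v, hCD2, hrep2⟩ := h2
  have h1' : IsHPRep X R1 u C1 D1 :=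
    ⟨haff, hnc, hC1ne, hD1ne, hC1s, hD1s, hC1c, hD1c, hC1v, hD1v, hCD1, hrep1⟩
  have h2' : IsHPRep X R2 u C2 D2 :=
    ⟨haff, hnc, hC2ne, hD2ne, hC2s, hD2s, hC2c, hD2c, hC2v, hD2v, hCD2, hrep2⟩
  constructor
  · -- more ambiguity loving → D2 ⊆ D1
    intro H q hqD2
    by_contra hqD1
    -- separation
    obtain ⟨L, tval, hLt, htq⟩ :=
      geometric_hahn_banach_closed_point hD1v (hD1c.isClosed) hqD1
    obtain ⟨F, hF⟩ := clm_pi_repr L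
    set c : MSet S → ℝ := fun A => L (Pi.single A (1:ℝ)) with hc
    -- utility values
    obtain ⟨x0, hx0, y0, hy0, hne0⟩ := hnc
    obtain ⟨xa, hxa, xb, hxb, hab⟩ : ∃ xa ∈ X, ∃ xb ∈ X, u xa < u xb := by
      rcases hne0.lt_or_gt with h | h
      · exact ⟨x0, hx0, y0, hy0, h⟩
      · exact ⟨y0, hy0, x0, hx0, h⟩
    set ra := u xa with hra
    set rb := u xb with hrb
    set M : ℝ := 1 + |tval| + ∑ A ∈ F, |c A| with hM
    have hMpos : 0 < M := by
      have h1a : (0:ℝ) ≤ |tval| := abs_nonneg _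
      have h2a : (0:ℝ) ≤ ∑ A ∈ F, |c A| := Finset.sum_nonneg (fun A _ => abs_nonneg _)
      simp only [hM]; linarith
    set α : ℝ := (rb - ra) / (2 * M) with hα
    set β : ℝ := (ra + rb) / 2 with hβ
    have hαpos : 0 < α := div_pos (by linarith) (by linarith)
    have hnum : ∀ r : ℝ, |r| < M → ra < α * r + β ∧ α * r + β < rb := by
      intro r hr
      have h1a : |α * r| = α * |r| := by rw [abs_mul, abs_of_pos hαpos]
      have h2a : α * |r| < α * M := by
        exact mul_lt_mul_of_pos_left hr hαpos
      have h3a : α * M = (rb - ra) / 2 := by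
        field_simp [hα]
        rw [hα, div_mul_eq_mul_div, div_mul_eq_mul_div, div_eq_iff (mul_pos two_pos hMpos).ne']; ring
      have h4a' : |α * r| < (rb - ra) / 2 := by rw [h1a, ← h3a]; exact h2a
      have h4a := abs_lt.mp h4a'
      constructor <;> [skip; skip] <;> simp only [hβ] at * <;> linarith [h4a.1, h4a.2]
    -- the function γ parametrizing outcomes by their utility value
    set γ : ℝ → V := fun r => ((r - ra) / (rb - ra)) • xb + (1 - (r - ra) / (rb - ra)) • xa
      with hγ
    have hγprop : ∀ r : ℝ, ra < r → r < rb → γ r ∈ X ∧ u (γ r) = r := by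
      intro r h1a h2a
      have hba : (0:ℝ) < rb - ra := by linarith
      have ht0 : 0 ≤ (r - ra) / (rb - ra) := div_nonneg (by linarith) hba.le
      have ht1 : (r - ra) / (rb - ra) ≤ 1 := by
        rw [div_le_one hba]; linarith
      refine ⟨hX hxb hxa ht0 (by linarith) (by ring), ?_⟩
      rw [hγ]
      have := haff xb hxb xa hxa ((r - ra) / (rb - ra)) ht0 ht1
      rw [this]
      have hcan : (r - ra) / (rb - ra) * (rb - ra) = r - ra :=
        div_mul_cancel₀ _ hba.ne'
      nlinarith [hcan]
    -- the simple "utility profile"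
    set ψ : S → ℝ :=
      fun s : S => α * (∑ A ∈ F, c A * (A.1.indicator (fun _ => (1:ℝ)) s)) + β with hψ
    have hψbound : ∀ s : S, ra < ψ s ∧ ψ s < rb := by
      intro s
      have habs : |∑ A ∈ F, c A * (A.1.indicator (fun _ => (1:ℝ)) s)| < M := by
        refine lt_of_le_of_lt (Finset.abs_sum_le_sum_abs _ _) ?_
        have : ∀ A ∈ F, |c A * (A.1.indicator (fun _ => (1:ℝ)) s)| ≤ |c A| := by
          intro A _
          rw [abs_mul]
          by_cases h : s ∈ A.1
          · rw [Set.indicator_of_mem h]; simp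
          · rw [Set.indicator_of_notMem h]; simp [abs_nonneg]
        refine lt_of_le_of_lt (Finset.sum_le_sum this) ?_
        simp only [hM]
        have : (0:ℝ) ≤ |tval| := abs_nonneg _
        linarith
      exact hnum _ habs
    set f : S → V := fun s => γ (ψ s) with hf'
    have hψsimp : IsSimpleFn ψ := (fInt_indicator_comb (hD2s hqD2) F c α β).1
    have hf : IsAct X f := by
      refine ⟨fun s => (hγprop (ψ s) (hψbound s).1 (hψbound s).2).1, ?_, ?_⟩
      · exact (comp_simple hψsimp.1 hψsimp.2 γ).1
      · exact (comp_simple hψsimp.1 hψsimp.2 γ).2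
    have hufψ : (fun s => u (f s)) = ψ := by
      funext s
      exact (hγprop (ψ s) (hψbound s).1 (hψbound s).2).2
    have hEU : ∀ p ∈ ProbCharges S, EU u f p = α * L p + β := by
      intro p hp
      have : EU u f p = fInt p ψ := by rw [EU, hufψ]
      rw [this, (fInt_indicator_comb hp F c α β).2, hF p]
      congr 2
      exact Finset.sum_congr rfl (fun A _ => mul_comm _ _)
    -- the separating constant outcome
    have htM : |tval| < M := by
      have : (0:ℝ) ≤ ∑ A ∈ F, |c A| := Finset.sum_nonneg (fun A _ => abs_nonneg _)
      simp only [hM]; linarith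
    obtain ⟨hrt1, hrt2⟩ := hnum tval htM
    set x : V := γ (α * tval + β) with hx'
    obtain ⟨hxX, hux⟩ := hγprop (α * tval + β) hrt1 hrt2
    -- R1 x f holds
    have hR1 : R1 (constAct S x) f := by
      rw [hp_const_char h1' hf hxX, hux]
      have hcpt := EU_image_compact hf u hD1c
      have hmem := hcpt.sSup_mem (hD1ne.image _)
      obtain ⟨pstar, hpstar, heq⟩ := hmem
      show sSup (EU u f '' D1) < α * tval + β
      rw [← heq, hEU pstar (hD1s hpstar)]
      have := hLt pstar hpstar
      nlinarith
    have hR2 := H f hf x hxX hR1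
    rw [hp_const_char h2' hf hxX, hux] at hR2
    have hqle : EU u f q ≤ maxEU u D2 f :=
      le_csSup (EU_image_compact hf u hD2c).bddAbove ⟨q, hqD2, rfl⟩
    rw [hEU q (hD2s hqD2)] at hqle
    have : α * tval + β < α * L q + β := by nlinarith
    have : maxEU u D2 f < maxEU u D2 f := by
      calc maxEU u D2 f < α * tval + β := hR2
        _ < α * L q + β := this
        _ ≤ maxEU u D2 f := hqle
    exact lt_irrefl _ this
  · -- D2 ⊆ D1 → more ambiguity loving
    intro hsub f hf x hx hR1
    rw [hp_const_char h1' hf hx] at hR1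
    rw [hp_const_char h2' hf hx]
    refine lt_of_le_of_lt ?_ hR1
    exact csSup_le_csSup (EU_image_compact hf u hD1c).bddAbove (hD2ne.image _)
      (Set.image_mono hsub)


end Statement
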